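/- Let v be an inner vertex of a branch decomposition T with children v1 and v2, let ν_x : D → ℝ for every x ∈ X, and for a vertex u and τ : X_u → D set ν_u(τ) := Σ_{x∈X_u} ν_x(τ(x)). Let (Φ,Ψ) be a shape for v with X̂_v(Φ,Ψ) nonempty, and let P denote the set of pairs of shapes ((Φ1,Ψ1),(Φ2,Ψ2)) for v1, v2 such that (Φ,Ψ), (Φ1,Ψ1), (Φ2,Ψ2) are linked and both X̂_{v1}(Φ1,Ψ1) and X̂_{v2}(Φ2,Ψ2) are nonempty. Then max{ ν_v(τ) : τ ∈ X̂_v(Φ,Ψ) } = max over ((Φ1,Ψ1),(Φ2,Ψ2)) ∈ P of ( max{ ν_{v1}(τ1) : τ1 ∈ X̂_{v1}(Φ1,Ψ1) } + max{ ν_{v2}(τ2) : τ2 ∈ X̂_{v2}(Φ2,Ψ2) } ). -/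
import Mathlib


open Finset

/-- A (translated) separable system with variable type `V`, constraint type `C` and
finite domain `D`.  The constraint set is `C = Cin ∪ Cge` (disjointly), where `Cin`
is the set of constraints of type `∈` (with target set `Γ c` whose largest element
is the threshold `γ c`) and `Cge` is the set of constraints of type `≥` (with
threshold `γ c`).  Every constraint `c` has nonnegative summands `g c x : D → ℕ`. -/
structure SepSystem (V C D : Type) where
  /-- the summand functions `g^c_x : D → ℤ≥0` -/
  g : C → V → D → ℕ
  /-- the thresholds `γ^c` -/
  γ : C → ℕ
  /-- the target sets `Γ^c` for constraints in `C^∈` -/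
  Γ : C → Finset ℕ
  /-- the set of constraints of type `∈` -/
  Cin : Finset C
  /-- the set of constraints of type `≥` -/
  Cge : Finset C
  /-- `C^∈` and `C^≥` are disjoint -/
  disj : Disjoint Cin Cge
  /-- every constraint is in `C^∈ ∪ C^≥` -/
  cover : ∀ c, c ∈ Cin ∨ c ∈ Cge
  /-- for `c ∈ C^∈`, `γ^c` belongs to `Γ^c` … -/
  gammaMem : ∀ c ∈ Cin, γ c ∈ Γ c
  /-- … and is its largest element -/
  gammaMax : ∀ c ∈ Cin, ∀ a ∈ Γ c, a ≤ γ c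

namespace SepSystem

variable {V C D : Type} [DecidableEq V] [DecidableEq C] [Fintype V] [Fintype C]

/-- The constraint bound `cb^c(τ)` of the assignment `τ` restricted to `X'`. -/
def cb (S : SepSystem V C D) (X' : Finset V) (τ : V → D) (c : C) : ℕ :=
  ∑ x ∈ X', S.g c x (τ x)

/-- The map `C'/τ` (for `τ` restricted to `X'`), encoded as the function `C → ℕ`
that vanishes outside `C'`. -/
def cdiv (S : SepSystem V C D) (C' : Finset C) (X' : Finset V) (τ : V → D) : C → ℕ :=
  fun c => if c ∈ C' then min (S.cb X' τ c) (S.γ c) else 0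

/-- The projection `proj(C', X') = { C'/τ : τ : X' → D }`. -/
def proj (S : SepSystem V C D) (C' : Finset C) (X' : Finset V) : Set (C → ℕ) :=
  { f | ∃ τ : V → D, f = S.cdiv C' X' τ }

end SepSystem
namespace SepSystem

variable {V C D : Type} [DecidableEq V] [DecidableEq C] [Fintype V] [Fintype C]

/-- `τ` (restricted to `X_v`) has shape `(Φ, Ψ)` at a vertex `v` with variables `Xv`
and constraints `Cv`: conditions (S1), (S1*), (S2∈), (S2≥). -/
def HasShape (S : SepSystem V C D) (Xv : Finset V) (Cv : Finset C)
    (Φ Ψ : C → ℕ) (τ : V → D) : Prop :=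
  (∀ c ∈ Cvᶜ, Φ c = min (S.cb Xv τ c) (S.γ c)) ∧
  (∀ c ∈ Cvᶜ ∩ S.Cin, S.cb Xv τ c ≤ S.γ c) ∧
  (∀ c ∈ Cv ∩ S.Cin, Ψ c + S.cb Xv τ c ∈ S.Γ c) ∧
  (∀ c ∈ Cv ∩ S.Cge, S.γ c ≤ Ψ c + S.cb Xv τ c)

end SepSystem
namespace SepSystem

variable {V C D : Type} [DecidableEq V] [DecidableEq C] [Fintype V] [Fintype C]

/-- `(Φ,Ψ)`, `(Φ1,Ψ1)`, `(Φ2,Ψ2)` are linked shapes for an inner vertex `v`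
(variables `Xv1 ∪ Xv2`, constraints `Cv1 ∪ Cv2`) with children `v1` and `v2`:
they are shapes, they satisfy (L1*), (L2*), (L3*) and the equations (L1), (L2), (L3). -/
def Linked (S : SepSystem V C D) (Xv1 Xv2 : Finset V) (Cv1 Cv2 : Finset C)
    (Φ Ψ Φ1 Ψ1 Φ2 Ψ2 : C → ℕ) : Prop :=
  Ψ ∈ S.proj (Cv1 ∪ Cv2) (Xv1 ∪ Xv2)ᶜ ∧
  Φ1 ∈ S.proj Cv1ᶜ Xv1 ∧
  Φ2 ∈ S.proj Cv2ᶜ Xv2 ∧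
  Φ ∈ S.proj (Cv1 ∪ Cv2)ᶜ (Xv1 ∪ Xv2) ∧
  Ψ1 ∈ S.proj Cv1 Xv1ᶜ ∧
  Ψ2 ∈ S.proj Cv2 Xv2ᶜ ∧
  (∀ c ∈ (Cv1 ∪ Cv2)ᶜ ∩ S.Cin, Φ1 c + Φ2 c ≤ S.γ c) ∧
  (∀ c ∈ Cv1 ∩ S.Cin, Ψ c + Φ2 c ≤ S.γ c) ∧
  (∀ c ∈ Cv2 ∩ S.Cin, Ψ c + Φ1 c ≤ S.γ c) ∧
  (∀ c ∈ (Cv1 ∪ Cv2)ᶜ, Φ c = min (Φ1 c + Φ2 c) (S.γ c)) ∧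
  (∀ c ∈ Cv1, Ψ1 c = min (Ψ c + Φ2 c) (S.γ c)) ∧
  (∀ c ∈ Cv2, Ψ2 c = min (Ψ c + Φ1 c) (S.γ c))

end SepSystem

namespace SepSystem

variable {V C D : Type} [DecidableEq V] [DecidableEq C] [Fintype V] [Fintype C]

/-- The set of values `ν_v(τ)` over all assignments `τ : X_v → D` of shape `(Φ,Ψ)`,
where `ν_v(τ) = Σ_{x ∈ X_v} ν_x(τ(x))`. -/
def valSet (S : SepSystem V C D) (ν : V → D → ℝ) (Xv : Finset V) (Cv : Finset C)
    (Φ Ψ : C → ℕ) : Set ℝ :=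
  { r | ∃ τ : V → D, S.HasShape Xv Cv Φ Ψ τ ∧ r = ∑ x ∈ Xv, ν x (τ x) }

end SepSystem

namespace SepSystem

variable {V C D : Type} [DecidableEq V] [DecidableEq C] [Fintype V] [Fintype C]

lemma cb_union_eq (S : SepSystem V C D) {A B : Finset V} (h : Disjoint A B) (τ : V → D) (c : C) :
    S.cb (A ∪ B) τ c = S.cb A τ c + S.cb B τ c := Finset.sum_union h

lemma cb_congr (S : SepSystem V C D) {A : Finset V} {τ σ : V → D}
    (h : ∀ x ∈ A, τ x = σ x) (c : C) : S.cb A τ c = S.cb A σ c :=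
  Finset.sum_congr rfl fun x hx => by rw [h x hx]

lemma aux_forward (S : SepSystem V C D) (Xv1 Xv2 : Finset V) (Cv1 Cv2 : Finset C)
    (hX : Disjoint Xv1 Xv2) (hC : Disjoint Cv1 Cv2) (Φ Ψ : C → ℕ)
    (hΦ : Φ ∈ S.proj (Cv1 ∪ Cv2)ᶜ (Xv1 ∪ Xv2))
    (hΨ : Ψ ∈ S.proj (Cv1 ∪ Cv2) (Xv1 ∪ Xv2)ᶜ)
    (τ : V → D) (hτ : S.HasShape (Xv1 ∪ Xv2) (Cv1 ∪ Cv2) Φ Ψ τ) :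
    ∃ Φ1 Ψ1 Φ2 Ψ2, S.Linked Xv1 Xv2 Cv1 Cv2 Φ Ψ Φ1 Ψ1 Φ2 Ψ2 ∧
      S.HasShape Xv1 Cv1 Φ1 Ψ1 τ ∧ S.HasShape Xv2 Cv2 Φ2 Ψ2 τ := by
  classical
  obtain ⟨τΨ, hΨeq⟩ := hΨ
  obtain ⟨h1, h2, h3, h4⟩ := hτ
  set σ1 : V → D := fun x => if x ∈ Xv2 then τ x else τΨ x with hσ1def
  set σ2 : V → D := fun x => if x ∈ Xv1 then τ x else τΨ x with hσ2def
  have hb : ∀ c, S.cb (Xv1 ∪ Xv2) τ c = S.cb Xv1 τ c + S.cb Xv2 τ c :=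
    fun _ => Finset.sum_union hX
  have hX1c : Xv1ᶜ = Xv2 ∪ (Xv1 ∪ Xv2)ᶜ := by
    ext x
    simp only [Finset.mem_compl, Finset.mem_union]
    have : x ∈ Xv1 → x ∉ Xv2 := fun h => Finset.disjoint_left.mp hX h
    tauto
  have hX2c : Xv2ᶜ = Xv1 ∪ (Xv1 ∪ Xv2)ᶜ := by
    ext x
    simp only [Finset.mem_compl, Finset.mem_union]
    have : x ∈ Xv1 → x ∉ Xv2 := fun h => Finset.disjoint_left.mp hX h
    tauto
  have hd2 : Disjoint Xv2 (Xv1 ∪ Xv2)ᶜ := Finset.disjoint_left.mpr fun x hx hx' =>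
    (Finset.mem_compl.mp hx') (Finset.mem_union_right _ hx)
  have hd1 : Disjoint Xv1 (Xv1 ∪ Xv2)ᶜ := Finset.disjoint_left.mpr fun x hx hx' =>
    (Finset.mem_compl.mp hx') (Finset.mem_union_left _ hx)
  have hcb1 : ∀ c, S.cb Xv1ᶜ σ1 c = S.cb Xv2 τ c + S.cb (Xv1 ∪ Xv2)ᶜ τΨ c := by
    intro c
    rw [hX1c, S.cb_union_eq hd2]
    congr 1
    · exact S.cb_congr (fun x hx => by simp [σ1, hx]) c
    · exact S.cb_congr (fun x hx => by
        simp only [σ1]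
        rw [if_neg fun h => (Finset.mem_compl.mp hx) (Finset.mem_union_right _ h)]) c
  have hcb2 : ∀ c, S.cb Xv2ᶜ σ2 c = S.cb Xv1 τ c + S.cb (Xv1 ∪ Xv2)ᶜ τΨ c := by
    intro c
    rw [hX2c, S.cb_union_eq hd1]
    congr 1
    · exact S.cb_congr (fun x hx => by simp [σ2, hx]) c
    · exact S.cb_congr (fun x hx => by
        simp only [σ2]
        rw [if_neg fun h => (Finset.mem_compl.mp hx) (Finset.mem_union_left _ h)]) c
  have hΨval : ∀ c ∈ Cv1 ∪ Cv2, Ψ c = min (S.cb (Xv1 ∪ Xv2)ᶜ τΨ c) (S.γ c) := by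
    intro c hc; rw [hΨeq]; simp [cdiv, hc]
  have hΦ1 : ∀ c, c ∉ Cv1 → S.cdiv Cv1ᶜ Xv1 τ c = min (S.cb Xv1 τ c) (S.γ c) := fun c hc => by
    simp [cdiv, hc]
  have hΦ2 : ∀ c, c ∉ Cv2 → S.cdiv Cv2ᶜ Xv2 τ c = min (S.cb Xv2 τ c) (S.γ c) := fun c hc => by
    simp [cdiv, hc]
  have hΨ1 : ∀ c ∈ Cv1, S.cdiv Cv1 Xv1ᶜ σ1 c
      = min (S.cb Xv2 τ c + S.cb (Xv1 ∪ Xv2)ᶜ τΨ c) (S.γ c) := fun c hc => by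
    simp [cdiv, hc, hcb1]
  have hΨ2 : ∀ c ∈ Cv2, S.cdiv Cv2 Xv2ᶜ σ2 c
      = min (S.cb Xv1 τ c + S.cb (Xv1 ∪ Xv2)ᶜ τΨ c) (S.γ c) := fun c hc => by
    simp [cdiv, hc, hcb2]
  have hC12 : ∀ c ∈ Cv1, c ∉ Cv2 := fun c hc => Finset.disjoint_left.mp hC hc
  have hC21 : ∀ c ∈ Cv2, c ∉ Cv1 := fun c hc => Finset.disjoint_right.mp hC hc
  refine ⟨S.cdiv Cv1ᶜ Xv1 τ, S.cdiv Cv1 Xv1ᶜ σ1, S.cdiv Cv2ᶜ Xv2 τ, S.cdiv Cv2 Xv2ᶜ σ2,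
    ⟨⟨τΨ, hΨeq⟩, ⟨τ, rfl⟩, ⟨τ, rfl⟩, hΦ, ⟨σ1, rfl⟩, ⟨σ2, rfl⟩, ?_, ?_, ?_, ?_, ?_, ?_⟩,
    ⟨?_, ?_, ?_, ?_⟩, ⟨?_, ?_, ?_, ?_⟩⟩
  -- (L1*)
  · intro c hc
    obtain ⟨hcv, hcin⟩ := Finset.mem_inter.mp hc
    have hcv' := Finset.mem_compl.mp hcv
    have hc1 : c ∉ Cv1 := fun h => hcv' (Finset.mem_union_left _ h)
    have hc2 : c ∉ Cv2 := fun h => hcv' (Finset.mem_union_right _ h)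
    have hle := h2 c hc
    rw [hb c] at hle
    rw [hΦ1 c hc1, hΦ2 c hc2]
    omega
  -- (L2*)
  · intro c hc
    obtain ⟨hc1, hcin⟩ := Finset.mem_inter.mp hc
    have hmem := h3 c (Finset.mem_inter.mpr ⟨Finset.mem_union_left _ hc1, hcin⟩)
    have hle := S.gammaMax c hcin _ hmem
    rw [hb c, hΨval c (Finset.mem_union_left _ hc1)] at hle
    rw [hΨval c (Finset.mem_union_left _ hc1), hΦ2 c (hC12 c hc1)]
    omega
  -- (L3*)
  · intro c hc
    obtain ⟨hc2, hcin⟩ := Finset.mem_inter.mp hc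
    have hmem := h3 c (Finset.mem_inter.mpr ⟨Finset.mem_union_right _ hc2, hcin⟩)
    have hle := S.gammaMax c hcin _ hmem
    rw [hb c, hΨval c (Finset.mem_union_right _ hc2)] at hle
    rw [hΨval c (Finset.mem_union_right _ hc2), hΦ1 c (hC21 c hc2)]
    omega
  -- (L1)
  · intro c hc
    have hcv' := Finset.mem_compl.mp hc
    have hc1 : c ∉ Cv1 := fun h => hcv' (Finset.mem_union_left _ h)
    have hc2 : c ∉ Cv2 := fun h => hcv' (Finset.mem_union_right _ h)
    have heq := h1 c hc
    rw [hb c] at heq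
    rw [heq, hΦ1 c hc1, hΦ2 c hc2]
    omega
  -- (L2)
  · intro c hc
    rw [hΨ1 c hc, hΨval c (Finset.mem_union_left _ hc), hΦ2 c (hC12 c hc)]
    omega
  -- (L3)
  · intro c hc
    rw [hΨ2 c hc, hΨval c (Finset.mem_union_right _ hc), hΦ1 c (hC21 c hc)]
    omega
  -- shape of τ at v1
  · intro c hc
    exact hΦ1 c (Finset.mem_compl.mp hc)
  · intro c hc
    obtain ⟨hcv, hcin⟩ := Finset.mem_inter.mp hc
    have hc1 := Finset.mem_compl.mp hcv
    by_cases hc2 : c ∈ Cv2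
    · have hmem := h3 c (Finset.mem_inter.mpr ⟨Finset.mem_union_right _ hc2, hcin⟩)
      have hle := S.gammaMax c hcin _ hmem
      rw [hb c] at hle
      omega
    · have hle := h2 c (Finset.mem_inter.mpr ⟨Finset.mem_compl.mpr
        (fun h => (Finset.mem_union.mp h).elim hc1 hc2), hcin⟩)
      rw [hb c] at hle
      omega
  · intro c hc
    obtain ⟨hc1, hcin⟩ := Finset.mem_inter.mp hc
    have hmem := h3 c (Finset.mem_inter.mpr ⟨Finset.mem_union_left _ hc1, hcin⟩)
    have hle := S.gammaMax c hcin _ hmem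
    rw [hb c, hΨval c (Finset.mem_union_left _ hc1)] at hle hmem
    have heq : S.cdiv Cv1 Xv1ᶜ σ1 c + S.cb Xv1 τ c
        = min (S.cb (Xv1 ∪ Xv2)ᶜ τΨ c) (S.γ c) + (S.cb Xv1 τ c + S.cb Xv2 τ c) := by
      rw [hΨ1 c hc1]; omega
    rw [heq]; exact hmem
  · intro c hc
    obtain ⟨hc1, hcge⟩ := Finset.mem_inter.mp hc
    have hle := h4 c (Finset.mem_inter.mpr ⟨Finset.mem_union_left _ hc1, hcge⟩)
    rw [hb c, hΨval c (Finset.mem_union_left _ hc1)] at hle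
    rw [hΨ1 c hc1]
    omega
  -- shape of τ at v2
  · intro c hc
    exact hΦ2 c (Finset.mem_compl.mp hc)
  · intro c hc
    obtain ⟨hcv, hcin⟩ := Finset.mem_inter.mp hc
    have hc2 := Finset.mem_compl.mp hcv
    by_cases hc1 : c ∈ Cv1
    · have hmem := h3 c (Finset.mem_inter.mpr ⟨Finset.mem_union_left _ hc1, hcin⟩)
      have hle := S.gammaMax c hcin _ hmem
      rw [hb c] at hle
      omega
    · have hle := h2 c (Finset.mem_inter.mpr ⟨Finset.mem_compl.mpr
        (fun h => (Finset.mem_union.mp h).elim hc1 hc2), hcin⟩)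
      rw [hb c] at hle
      omega
  · intro c hc
    obtain ⟨hc2, hcin⟩ := Finset.mem_inter.mp hc
    have hmem := h3 c (Finset.mem_inter.mpr ⟨Finset.mem_union_right _ hc2, hcin⟩)
    have hle := S.gammaMax c hcin _ hmem
    rw [hb c, hΨval c (Finset.mem_union_right _ hc2)] at hle hmem
    have heq : S.cdiv Cv2 Xv2ᶜ σ2 c + S.cb Xv2 τ c
        = min (S.cb (Xv1 ∪ Xv2)ᶜ τΨ c) (S.γ c) + (S.cb Xv1 τ c + S.cb Xv2 τ c) := by
      rw [hΨ2 c hc2]; omega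
    rw [heq]; exact hmem
  · intro c hc
    obtain ⟨hc2, hcge⟩ := Finset.mem_inter.mp hc
    have hle := h4 c (Finset.mem_inter.mpr ⟨Finset.mem_union_right _ hc2, hcge⟩)
    rw [hb c, hΨval c (Finset.mem_union_right _ hc2)] at hle
    rw [hΨ2 c hc2]
    omega

lemma aux_backward (S : SepSystem V C D) (Xv1 Xv2 : Finset V) (Cv1 Cv2 : Finset C)
    (hX : Disjoint Xv1 Xv2) (hC : Disjoint Cv1 Cv2) (Φ Ψ Φ1 Ψ1 Φ2 Ψ2 : C → ℕ)
    (hlink : S.Linked Xv1 Xv2 Cv1 Cv2 Φ Ψ Φ1 Ψ1 Φ2 Ψ2)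
    (τ1 τ2 : V → D) (h1 : S.HasShape Xv1 Cv1 Φ1 Ψ1 τ1) (h2 : S.HasShape Xv2 Cv2 Φ2 Ψ2 τ2) :
    S.HasShape (Xv1 ∪ Xv2) (Cv1 ∪ Cv2) Φ Ψ (fun x => if x ∈ Xv1 then τ1 x else τ2 x) := by
  classical
  obtain ⟨-, -, -, -, -, -, L1s, L2s, L3s, L1, L2, L3⟩ := hlink
  obtain ⟨A1, B1, G1, D1⟩ := h1
  obtain ⟨A2, B2, G2, D2⟩ := h2
  set τ : V → D := fun x => if x ∈ Xv1 then τ1 x else τ2 x with hτdef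
  have e1 : ∀ c, S.cb Xv1 τ c = S.cb Xv1 τ1 c := fun c =>
    S.cb_congr (fun x hx => by simp [τ, hx]) c
  have e2 : ∀ c, S.cb Xv2 τ c = S.cb Xv2 τ2 c := fun c =>
    S.cb_congr (fun x hx => by simp [τ, Finset.disjoint_right.mp hX hx]) c
  have hb : ∀ c, S.cb (Xv1 ∪ Xv2) τ c = S.cb Xv1 τ1 c + S.cb Xv2 τ2 c := fun c =>
    (S.cb_union_eq hX τ c).trans (by rw [e1 c, e2 c])
  have hC12 : ∀ c ∈ Cv1, c ∉ Cv2 := fun c hc => Finset.disjoint_left.mp hC hc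
  have hC21 : ∀ c ∈ Cv2, c ∉ Cv1 := fun c hc => Finset.disjoint_right.mp hC hc
  refine ⟨?_, ?_, ?_, ?_⟩
  · intro c hc
    have hcv' := Finset.mem_compl.mp hc
    have hc1 : c ∉ Cv1 := fun h => hcv' (Finset.mem_union_left _ h)
    have hc2 : c ∉ Cv2 := fun h => hcv' (Finset.mem_union_right _ h)
    rw [hb c, L1 c hc, A1 c (Finset.mem_compl.mpr hc1), A2 c (Finset.mem_compl.mpr hc2)]
    omega
  · intro c hc
    obtain ⟨hcv, hcin⟩ := Finset.mem_inter.mp hc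
    have hcv' := Finset.mem_compl.mp hcv
    have hc1 : c ∉ Cv1 := fun h => hcv' (Finset.mem_union_left _ h)
    have hc2 : c ∉ Cv2 := fun h => hcv' (Finset.mem_union_right _ h)
    have hs := L1s c hc
    rw [A1 c (Finset.mem_compl.mpr hc1), A2 c (Finset.mem_compl.mpr hc2)] at hs
    have hb1 := B1 c (Finset.mem_inter.mpr ⟨Finset.mem_compl.mpr hc1, hcin⟩)
    have hb2 := B2 c (Finset.mem_inter.mpr ⟨Finset.mem_compl.mpr hc2, hcin⟩)
    rw [hb c]
    omega
  · intro c hc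
    obtain ⟨hcv, hcin⟩ := Finset.mem_inter.mp hc
    rw [hb c]
    rcases Finset.mem_union.mp hcv with hc1 | hc2
    · have hG := G1 c (Finset.mem_inter.mpr ⟨hc1, hcin⟩)
      have hL2 := L2 c hc1
      have hL2s := L2s c (Finset.mem_inter.mpr ⟨hc1, hcin⟩)
      have hA2 := A2 c (Finset.mem_compl.mpr (hC12 c hc1))
      have hB2 := B2 c (Finset.mem_inter.mpr ⟨Finset.mem_compl.mpr (hC12 c hc1), hcin⟩)
      have heq : Ψ c + (S.cb Xv1 τ1 c + S.cb Xv2 τ2 c) = Ψ1 c + S.cb Xv1 τ1 c := by omega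
      rw [heq]; exact hG
    · have hG := G2 c (Finset.mem_inter.mpr ⟨hc2, hcin⟩)
      have hL3 := L3 c hc2
      have hL3s := L3s c (Finset.mem_inter.mpr ⟨hc2, hcin⟩)
      have hA1 := A1 c (Finset.mem_compl.mpr (hC21 c hc2))
      have hB1 := B1 c (Finset.mem_inter.mpr ⟨Finset.mem_compl.mpr (hC21 c hc2), hcin⟩)
      have heq : Ψ c + (S.cb Xv1 τ1 c + S.cb Xv2 τ2 c) = Ψ2 c + S.cb Xv2 τ2 c := by omega
      rw [heq]; exact hG
  · intro c hc
    obtain ⟨hcv, hcge⟩ := Finset.mem_inter.mp hc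
    rw [hb c]
    rcases Finset.mem_union.mp hcv with hc1 | hc2
    · have hD := D1 c (Finset.mem_inter.mpr ⟨hc1, hcge⟩)
      have hL2 := L2 c hc1
      have hA2 := A2 c (Finset.mem_compl.mpr (hC12 c hc1))
      omega
    · have hD := D2 c (Finset.mem_inter.mpr ⟨hc2, hcge⟩)
      have hL3 := L3 c hc2
      have hA1 := A1 c (Finset.mem_compl.mpr (hC21 c hc2))
      omega

end SepSystem

/-- Optimization version of the decomposition proposition: for an inner vertex `v`
with children `v1`, `v2` and a shape `(Φ,Ψ)` for `v` with `X̂_v(Φ,Ψ) ≠ ∅`, the maximal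
value of an assignment of shape `(Φ,Ψ)` equals the maximum, over all pairs of shapes
for the children that are linked with `(Φ,Ψ)` and have nonempty sets of assignments, of
the sum of the two corresponding maximal values. -/
theorem SepSystem.shape_max_value {V C D : Type} [DecidableEq V] [DecidableEq C]
    [Fintype V] [Fintype C] [Fintype D] (S : SepSystem V C D)
    (ν : V → D → ℝ)
    (Xv1 Xv2 : Finset V) (Cv1 Cv2 : Finset C)
    (hX : Disjoint Xv1 Xv2) (hC : Disjoint Cv1 Cv2)
    (Φ Ψ : C → ℕ)
    (hΦ : Φ ∈ S.proj (Cv1 ∪ Cv2)ᶜ (Xv1 ∪ Xv2))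
    (hΨ : Ψ ∈ S.proj (Cv1 ∪ Cv2) (Xv1 ∪ Xv2)ᶜ)
    (hne : ∃ τ : V → D, S.HasShape (Xv1 ∪ Xv2) (Cv1 ∪ Cv2) Φ Ψ τ) :
    sSup (S.valSet ν (Xv1 ∪ Xv2) (Cv1 ∪ Cv2) Φ Ψ) =
      sSup { r : ℝ | ∃ Φ1 Ψ1 Φ2 Ψ2 : C → ℕ,
        S.Linked Xv1 Xv2 Cv1 Cv2 Φ Ψ Φ1 Ψ1 Φ2 Ψ2 ∧
        (∃ τ1 : V → D, S.HasShape Xv1 Cv1 Φ1 Ψ1 τ1) ∧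
        (∃ τ2 : V → D, S.HasShape Xv2 Cv2 Φ2 Ψ2 τ2) ∧
        r = sSup (S.valSet ν Xv1 Cv1 Φ1 Ψ1) + sSup (S.valSet ν Xv2 Cv2 Φ2 Ψ2) } := by
  classical
  obtain ⟨τ0, hτ0⟩ := hne
  have hfin : ∀ (Xw : Finset V) (Cw : Finset C) (Φ' Ψ' : C → ℕ),
      (S.valSet ν Xw Cw Φ' Ψ').Finite := fun Xw Cw Φ' Ψ' =>
    Set.Finite.subset (Set.finite_range fun τ : V → D => ∑ x ∈ Xw, ν x (τ x))
      (by rintro r ⟨τ, -, rfl⟩; exact ⟨τ, rfl⟩)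
  have hbdd : ∀ (Xw : Finset V) (Cw : Finset C) (Φ' Ψ' : C → ℕ),
      BddAbove (S.valSet ν Xw Cw Φ' Ψ') := fun _ _ _ _ => (hfin _ _ _ _).bddAbove
  have hmax : ∀ (Xw : Finset V) (Cw : Finset C) (Φ' Ψ' : C → ℕ) (τ : V → D),
      S.HasShape Xw Cw Φ' Ψ' τ →
      ∃ σ : V → D, S.HasShape Xw Cw Φ' Ψ' σ ∧
        sSup (S.valSet ν Xw Cw Φ' Ψ') = ∑ x ∈ Xw, ν x (σ x) := by
    intro Xw Cw Φ' Ψ' τ hτ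
    have hne' : (S.valSet ν Xw Cw Φ' Ψ').Nonempty := ⟨_, τ, hτ, rfl⟩
    obtain ⟨σ, hσ, hval⟩ := hne'.csSup_mem (hfin _ _ _ _)
    exact ⟨σ, hσ, hval⟩
  set Rs : Set ℝ := { r : ℝ | ∃ Φ1 Ψ1 Φ2 Ψ2 : C → ℕ,
        S.Linked Xv1 Xv2 Cv1 Cv2 Φ Ψ Φ1 Ψ1 Φ2 Ψ2 ∧
        (∃ τ1 : V → D, S.HasShape Xv1 Cv1 Φ1 Ψ1 τ1) ∧
        (∃ τ2 : V → D, S.HasShape Xv2 Cv2 Φ2 Ψ2 τ2) ∧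
        r = sSup (S.valSet ν Xv1 Cv1 Φ1 Ψ1) + sSup (S.valSet ν Xv2 Cv2 Φ2 Ψ2) } with hRs
  have hsub : Rs ⊆ S.valSet ν (Xv1 ∪ Xv2) (Cv1 ∪ Cv2) Φ Ψ := by
    rintro r ⟨Φ1, Ψ1, Φ2, Ψ2, hlink, ⟨τ1, hτ1⟩, ⟨τ2, hτ2⟩, rfl⟩
    obtain ⟨ρ1, hρ1, hs1⟩ := hmax _ _ _ _ τ1 hτ1
    obtain ⟨ρ2, hρ2, hs2⟩ := hmax _ _ _ _ τ2 hτ2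
    refine ⟨fun x => if x ∈ Xv1 then ρ1 x else ρ2 x,
      S.aux_backward _ _ _ _ hX hC _ _ _ _ _ _ hlink _ _ hρ1 hρ2, ?_⟩
    rw [hs1, hs2, Finset.sum_union hX]
    congr 1
    · exact Finset.sum_congr rfl fun x hx => by simp [hx]
    · exact Finset.sum_congr rfl fun x hx => by simp [Finset.disjoint_right.mp hX hx]
  obtain ⟨σ, hσ, hLval⟩ := hmax _ _ _ _ τ0 hτ0
  obtain ⟨Φ1, Ψ1, Φ2, Ψ2, hlink, hsh1, hsh2⟩ :=
    S.aux_forward _ _ _ _ hX hC _ _ hΦ hΨ σ hσ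
  have hrmem : (sSup (S.valSet ν Xv1 Cv1 Φ1 Ψ1) + sSup (S.valSet ν Xv2 Cv2 Φ2 Ψ2)) ∈ Rs :=
    ⟨Φ1, Ψ1, Φ2, Ψ2, hlink, ⟨σ, hsh1⟩, ⟨σ, hsh2⟩, rfl⟩
  have hRbdd : BddAbove Rs := BddAbove.mono hsub (hbdd _ _ _ _)
  apply le_antisymm
  · rw [hLval, Finset.sum_union hX]
    exact le_trans
      (add_le_add (le_csSup (hbdd _ _ _ _) ⟨σ, hsh1, rfl⟩)
        (le_csSup (hbdd _ _ _ _) ⟨σ, hsh2, rfl⟩))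
      (le_csSup hRbdd hrmem)
  · exact csSup_le_csSup (hbdd _ _ _ _) ⟨_, hrmem⟩ hsub
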